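/- Let A be a finite-dimensional commutative local ℂ-algebra with maximal ideal m and residue field ℂ, regarded as a normed ℂ-algebra. Let a ∈ m (so a is nilpotent), let n be a nonzero integer, let ε > 0, and let γ(t) = ε·e^{2πit}. Then the iterated integral of dx/x followed by d(1 − a x^n)/(1 − a x^n) along γ equals 2πi·log(1 − a ε^n); explicitly, ∫_{0 ≤ t₁ ≤ t₂ ≤ 1} (γ'(t₁)/γ(t₁))·(−a·n·γ(t₂)^{n−1}·γ'(t₂))·(1 − a·γ(t₂)^n)⁻¹ dt₁ dt₂ = 2πi·log(1 − a ε^n). -/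

import Mathlib

open MeasureTheory

/-- The simplex `{0 ≤ t 1 ≤ ⋯ ≤ t k ≤ 1}` in `[0,1]^k`. -/
def orderedSimplex (k : ℕ) : Set (Fin k → ℝ) :=
  {t | (∀ i, t i ∈ Set.Icc (0 : ℝ) 1) ∧ ∀ i j : Fin k, i ≤ j → t i ≤ t j}

/-- The circle of radius `ε` around `0`, parametrized by `t ↦ ε e^{2πit}`. -/
noncomputable def circlePath (ε : ℝ) : ℝ → ℂ :=
  fun t => (ε : ℂ) * Complex.exp (2 * Real.pi * Complex.I * (t : ℂ))

/-- `log (1 - u) := -∑_{k ≥ 1} u^k / k`; for `u` nilpotent this is a finite sum. -/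
noncomputable def logOneSub {A : Type*} [NormedCommRing A] [NormedAlgebra ℂ A] (u : A) : A :=
  -∑' k : ℕ, ((k + 1 : ℂ)⁻¹) • u ^ (k + 1)

section Auxiliary

lemma ring_inverse_one_sub' {A : Type*} [CommRing A] (u : A) (N : ℕ) (h : u ^ N = 0) :
    Ring.inverse (1 - u) = ∑ k ∈ Finset.range N, u ^ k := by
  have hmul : (1 - u) * ∑ k ∈ Finset.range N, u ^ k = 1 := by
    linear_combination (-1 : A) * geom_sum_mul u N - h
  have hu : IsUnit (1 - u) := IsUnit.of_mul_eq_one _ hmul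
  calc Ring.inverse (1 - u) = Ring.inverse (1 - u) * ((1 - u) * ∑ k ∈ Finset.range N, u ^ k) := by
        rw [hmul, mul_one]
    _ = (Ring.inverse (1 - u) * (1 - u)) * ∑ k ∈ Finset.range N, u ^ k := by ring
    _ = _ := by rw [Ring.inverse_mul_cancel _ hu, one_mul]

lemma pow_vanish' {A : Type*} [CommRing A] {u : A} {N m : ℕ} (h : u ^ N = 0) (hm : N ≤ m) :
    u ^ m = 0 := by
  calc u ^ m = u ^ N * u ^ (m - N) := by rw [← pow_add, Nat.add_sub_cancel' hm]
    _ = 0 := by rw [h, zero_mul]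

lemma logOneSub_eq_sum' {A : Type*} [NormedCommRing A] [NormedAlgebra ℂ A] (u : A) (N : ℕ)
    (h : u ^ N = 0) :
    logOneSub u = -∑ k ∈ Finset.range N, ((k + 1 : ℂ)⁻¹) • u ^ (k + 1) := by
  rw [logOneSub]
  congr 1
  refine tsum_eq_sum ?_
  intro k hk
  have hk' : N ≤ k + 1 := by
    have := Finset.mem_range.not.mp hk
    omega
  rw [pow_vanish' h hk', smul_zero]

lemma mem_orderedSimplex_two' (t : Fin 2 → ℝ) :
    t ∈ orderedSimplex 2 ↔ 0 ≤ t 0 ∧ t 0 ≤ t 1 ∧ t 1 ≤ 1 := by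
  constructor
  · rintro ⟨h1, h2⟩
    exact ⟨(h1 0).1, h2 0 1 (by decide), (h1 1).2⟩
  · rintro ⟨h0, h01, h1⟩
    refine ⟨fun i => ?_, fun i j hij => ?_⟩
    · fin_cases i <;> constructor <;> simp <;> linarith
    · fin_cases i <;> fin_cases j <;> simp_all

lemma isCompact_orderedSimplex_two' : IsCompact (orderedSimplex 2) := by
  have hcl : IsClosed (orderedSimplex 2) := by
    have he : orderedSimplex 2
        = {t : Fin 2 → ℝ | 0 ≤ t 0} ∩ ({t | t 0 ≤ t 1} ∩ {t | t 1 ≤ 1}) := by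
      ext t
      simp only [mem_orderedSimplex_two', Set.mem_inter_iff, Set.mem_setOf_eq]
    rw [he]
    exact (isClosed_le continuous_const (continuous_apply 0)).inter
      ((isClosed_le (continuous_apply 0) (continuous_apply 1)).inter
        (isClosed_le (continuous_apply 1) continuous_const))
  have hsub : orderedSimplex 2 ⊆ Set.Icc (0 : Fin 2 → ℝ) 1 := by
    intro t ht
    rw [mem_orderedSimplex_two'] at ht
    constructor <;> intro i <;> fin_cases i <;>
      simp only [Pi.zero_apply, Pi.one_apply] <;>
      [exact ht.1; exact le_trans ht.1 ht.2.1; exact le_trans ht.2.1 ht.2.2; exact ht.2.2]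
  exact isCompact_Icc.of_isClosed_subset hcl hsub

lemma measurableSet_orderedSimplex_two' : MeasurableSet (orderedSimplex 2) :=
  isCompact_orderedSimplex_two'.isClosed.measurableSet

lemma simplex_integral_exp' (c : ℂ) (hc : c ≠ 0) (hc1 : Complex.exp c = 1) :
    ∫ t in orderedSimplex 2, Complex.exp (c * (t 1)) = c⁻¹ := by
  have hmp : MeasurePreserving (MeasurableEquiv.finTwoArrow (α := ℝ)).symm
      (volume : Measure (ℝ × ℝ)) volume :=
    (volume_preserving_finTwoArrow ℝ).symm _
  have hemb := (MeasurableEquiv.finTwoArrow (α := ℝ)).symm.measurableEmbedding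
  have hpre : (MeasurableEquiv.finTwoArrow (α := ℝ)).symm ⁻¹' (orderedSimplex 2)
      = (Set.Icc (0:ℝ) 1 ×ˢ Set.Icc (0:ℝ) 1) ∩ {p : ℝ × ℝ | p.1 ≤ p.2} := by
    ext p
    simp only [Set.mem_preimage, mem_orderedSimplex_two', MeasurableEquiv.finTwoArrow_symm_apply,
      Set.mem_inter_iff, Set.mem_prod, Set.mem_Icc, Set.mem_setOf_eq]
    have e0 : (Fin.cons p.1 (Fin.cons p.2 finZeroElim) : Fin 2 → ℝ) 0 = p.1 := rfl
    have e1 : (Fin.cons p.1 (Fin.cons p.2 finZeroElim) : Fin 2 → ℝ) 1 = p.2 := rfl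
    rw [e0, e1]
    constructor
    · rintro ⟨h0, h01, h1⟩
      refine ⟨⟨⟨h0, ?_⟩, ⟨?_, h1⟩⟩, h01⟩ <;> linarith
    · rintro ⟨⟨⟨h0, _⟩, ⟨_, h1⟩⟩, h01⟩
      exact ⟨h0, h01, h1⟩
  have key := hmp.setIntegral_preimage_emb hemb
    (fun t : Fin 2 → ℝ => Complex.exp (c * (t 1))) (orderedSimplex 2)
  rw [← key, hpre]
  have hle : MeasurableSet {p : ℝ × ℝ | p.1 ≤ p.2} := measurableSet_le measurable_fst measurable_snd
  have hint : IntegrableOn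
      (({p : ℝ × ℝ | p.1 ≤ p.2}).indicator fun p : ℝ × ℝ => Complex.exp (c * p.2))
      (Set.Icc (0:ℝ) 1 ×ˢ Set.Icc (0:ℝ) 1) := by
    refine Integrable.indicator ?_ hle
    exact ContinuousOn.integrableOn_compact (isCompact_Icc.prod isCompact_Icc)
      (Continuous.continuousOn (by fun_prop))
  rw [show (fun p : ℝ × ℝ => Complex.exp (c * ((MeasurableEquiv.finTwoArrow (α := ℝ)).symm p 1)))
      = fun p : ℝ × ℝ => Complex.exp (c * p.2) from rfl]
  rw [← setIntegral_indicator hle, Measure.volume_eq_prod, setIntegral_prod _ hint]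
  have hinner : ∀ x ∈ Set.Icc (0:ℝ) 1,
      (∫ y in Set.Icc (0:ℝ) 1,
        ({p : ℝ × ℝ | p.1 ≤ p.2}).indicator (fun p : ℝ × ℝ => Complex.exp (c * p.2)) (x, y))
      = (1 - Complex.exp (c * x)) / c := by
    intro x hx
    have hf : (fun y : ℝ =>
        ({p : ℝ × ℝ | p.1 ≤ p.2}).indicator (fun p : ℝ × ℝ => Complex.exp (c * p.2)) (x, y))
        = fun y : ℝ => (Set.Ici x).indicator (fun y : ℝ => Complex.exp (c * y)) y := by
      funext y
      by_cases h : x ≤ y <;> simp [Set.indicator_apply, h]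
    rw [hf, setIntegral_indicator measurableSet_Ici]
    have hset : Set.Icc (0:ℝ) 1 ∩ Set.Ici x = Set.Icc x 1 := by
      ext y
      simp only [Set.mem_inter_iff, Set.mem_Icc, Set.mem_Ici]
      constructor
      · rintro ⟨⟨_, h1⟩, h2⟩; exact ⟨h2, h1⟩
      · rintro ⟨h1, h2⟩; exact ⟨⟨le_trans hx.1 h1, h2⟩, h1⟩
    rw [hset, integral_Icc_eq_integral_Ioc, ← intervalIntegral.integral_of_le hx.2,
      integral_exp_mul_complex hc]
    norm_num [hc1]
  rw [setIntegral_congr_fun measurableSet_Icc hinner]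
  have h1 : IntervalIntegrable (fun x : ℝ => Complex.exp (c * x)) volume 0 1 :=
    ((continuous_const.mul Complex.continuous_ofReal).cexp).intervalIntegrable 0 1
  rw [integral_Icc_eq_integral_Ioc, ← intervalIntegral.integral_of_le (zero_le_one)]
  rw [intervalIntegral.integral_div,
    intervalIntegral.integral_sub intervalIntegrable_const h1,
    intervalIntegral.integral_const, integral_exp_mul_complex hc]
  norm_num [hc1]

end Auxiliary

theorem iteratedIntegral_dx_div_x_logDeriv
    (A : Type*) [NormedCommRing A] [NormedAlgebra ℂ A] [FiniteDimensional ℂ A]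
    [IsLocalRing A]
    (hres : Function.Bijective ((IsLocalRing.residue A).comp (algebraMap ℂ A)))
    (a : A) (ha : a ∈ IsLocalRing.maximalIdeal A) (n : ℤ) (hn : n ≠ 0)
    (ε : ℝ) (hε : 0 < ε) :
    (∫ t in orderedSimplex 2,
        algebraMap ℂ A (deriv (circlePath ε) (t 0) / circlePath ε (t 0)) *
          (-a * algebraMap ℂ A ((n : ℂ) * circlePath ε (t 1) ^ (n - 1) *
              deriv (circlePath ε) (t 1)) *
            Ring.inverse (1 - a * algebraMap ℂ A (circlePath ε (t 1) ^ n)))) =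
      algebraMap ℂ A (2 * Real.pi * Complex.I) *
        logOneSub (a * algebraMap ℂ A ((ε : ℂ) ^ n)) := by
  -- notation
  set c : ℂ := 2 * Real.pi * Complex.I with hcdef
  have hc : c ≠ 0 := by
    refine mul_ne_zero (mul_ne_zero two_ne_zero ?_) Complex.I_ne_zero
    exact_mod_cast Complex.ofReal_ne_zero.mpr Real.pi_ne_zero
  have hγ : ∀ t : ℝ, circlePath ε t ≠ 0 := fun t =>
    mul_ne_zero (Complex.ofReal_ne_zero.mpr hε.ne') (Complex.exp_ne_zero _)
  -- derivative of the circle path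
  have hderiv : ∀ t : ℝ, deriv (circlePath ε) t = c * circlePath ε t := by
    intro t
    have h1 : HasDerivAt (fun z : ℂ => (ε : ℂ) * Complex.exp (c * z))
        ((ε : ℂ) * (Complex.exp (c * t) * c)) (t : ℂ) := by
      have := (((hasDerivAt_id (t : ℂ)).const_mul c).cexp).const_mul (ε : ℂ)
      simpa using this
    have h2 := h1.comp_ofReal
    have h3 : HasDerivAt (circlePath ε) ((ε : ℂ) * (Complex.exp (c * t) * c)) t := h2
    rw [h3.deriv, circlePath, hcdef]
    ring
  -- integer powers of the circle path
  have hγpow : ∀ (t : ℝ) (m : ℤ),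
      circlePath ε t ^ m = (ε : ℂ) ^ m * Complex.exp (c * m * t) := by
    intro t m
    rw [circlePath, mul_zpow, ← hcdef, ← Complex.exp_int_mul]
    congr 2
    ring
  -- nilpotency
  have hart : IsArtinianRing A := IsArtinianRing.of_finite ℂ A
  obtain ⟨N, hN⟩ : ∃ N : ℕ, a ^ N = 0 := by
    obtain ⟨N, hNpow⟩ := IsArtinianRing.isNilpotent_jacobson_bot (R := A)
    refine ⟨N, ?_⟩
    have hmem : a ∈ Ideal.jacobson (⊥ : Ideal A) := by
      rw [IsLocalRing.jacobson_eq_maximalIdeal ⊥ bot_ne_top]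
      exact ha
    have := Ideal.pow_mem_pow hmem N
    rw [hNpow] at this
    simpa using this
  -- the nilpotent elements `u t`
  have hu : ∀ t : ℝ, (a * algebraMap ℂ A (circlePath ε t ^ n)) ^ N = 0 := by
    intro t
    rw [mul_pow, hN, zero_mul]
  -- the coefficients
  set εn : ℂ := (ε : ℂ) ^ n with hεn
  have hcm : ∀ k : ℕ, (c * ((n * (k + 1) : ℤ) : ℂ)) ≠ 0 := by
    intro k
    refine mul_ne_zero hc ?_
    exact_mod_cast Int.cast_ne_zero.mpr (mul_ne_zero hn (by positivity))
  have hce : ∀ k : ℕ, Complex.exp (c * ((n * (k + 1) : ℤ) : ℂ)) = 1 := by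
    intro k
    rw [mul_comm, hcdef]
    exact Complex.exp_int_mul_two_pi_mul_I _
  -- pointwise form of the integrand
  have hpt : ∀ t : Fin 2 → ℝ,
      algebraMap ℂ A (deriv (circlePath ε) (t 0) / circlePath ε (t 0)) *
        (-a * algebraMap ℂ A ((n : ℂ) * circlePath ε (t 1) ^ (n - 1) *
            deriv (circlePath ε) (t 1)) *
          Ring.inverse (1 - a * algebraMap ℂ A (circlePath ε (t 1) ^ n)))
      = ∑ k ∈ Finset.range N,
          ((-(c * (n : ℂ) * c * εn ^ (k + 1))) *
            Complex.exp ((c * ((n * (k + 1) : ℤ) : ℂ)) * (t 1))) • a ^ (k + 1) := by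
    intro t
    rw [hderiv (t 0), hderiv (t 1), mul_div_assoc, div_self (hγ (t 0)), mul_one]
    have h1 : (n : ℂ) * circlePath ε (t 1) ^ (n - 1) * (c * circlePath ε (t 1))
        = c * (n : ℂ) * circlePath ε (t 1) ^ n := by
      rw [zpow_sub_one₀ (hγ (t 1)) n]
      linear_combination (c * (n : ℂ) * circlePath ε (t 1) ^ n) * mul_inv_cancel₀ (hγ (t 1))
    rw [h1, ring_inverse_one_sub' _ N (hu (t 1)), Finset.mul_sum, Finset.mul_sum]
    refine Finset.sum_congr rfl fun k _ => ?_
    -- complex coefficient identity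
    have hcoef : c * (c * (n : ℂ) * circlePath ε (t 1) ^ n * (circlePath ε (t 1) ^ n) ^ k)
        = (c * (n : ℂ) * c * εn ^ (k + 1)) *
            Complex.exp ((c * ((n * (k + 1) : ℤ) : ℂ)) * (t 1)) := by
      rw [hγpow (t 1) n, mul_pow, ← Complex.exp_nat_mul, hεn]
      rw [show (k : ℂ) * (c * (n : ℂ) * (t 1)) = c * ((n : ℂ) * k) * (t 1) by ring]
      rw [show ((n * (k + 1) : ℤ) : ℂ) = (n : ℂ) * ((k : ℂ) + 1) by push_cast; ring]
      rw [show c * ((n : ℂ) * ((k : ℂ) + 1)) * (t 1)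
          = c * (n : ℂ) * (t 1) + c * ((n : ℂ) * (k : ℂ)) * (t 1) by ring]
      rw [Complex.exp_add]
      ring
    calc algebraMap ℂ A c *
          (-a * algebraMap ℂ A (c * (n : ℂ) * circlePath ε (t 1) ^ n) *
            (a * algebraMap ℂ A (circlePath ε (t 1) ^ n)) ^ k)
        = -(algebraMap ℂ A
            (c * (c * (n : ℂ) * circlePath ε (t 1) ^ n * (circlePath ε (t 1) ^ n) ^ k)) *
              a ^ (k + 1)) := by
          simp only [map_mul, map_pow, mul_pow]
          ring
      _ = _ := by
          rw [hcoef, Algebra.smul_def]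
          simp only [map_neg, map_mul]
          ring
  -- rewrite the integral
  rw [setIntegral_congr_fun measurableSet_orderedSimplex_two' (fun t _ => hpt t)]
  -- integrability of each summand
  have hintk : ∀ k ∈ Finset.range N, IntegrableOn
      (fun t : Fin 2 → ℝ =>
        ((-(c * (n : ℂ) * c * εn ^ (k + 1))) *
          Complex.exp ((c * ((n * (k + 1) : ℤ) : ℂ)) * (t 1))) • a ^ (k + 1))
      (orderedSimplex 2) := by
    intro k _
    refine ContinuousOn.integrableOn_compact isCompact_orderedSimplex_two' ?_
    refine Continuous.continuousOn ?_
    exact (continuous_const.mul ((continuous_const.mul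
      (Complex.continuous_ofReal.comp (continuous_apply 1))).cexp)).smul continuous_const
  rw [integral_finset_sum _ hintk]
  -- compute each summand
  have hterm : ∀ k ∈ Finset.range N,
      (∫ t in orderedSimplex 2,
        ((-(c * (n : ℂ) * c * εn ^ (k + 1))) *
          Complex.exp ((c * ((n * (k + 1) : ℤ) : ℂ)) * (t 1))) • a ^ (k + 1))
      = ((-(c * (n : ℂ) * c * εn ^ (k + 1))) * (c * ((n * (k + 1) : ℤ) : ℂ))⁻¹) • a ^ (k + 1) := by
    intro k _
    rw [integral_smul_const, integral_const_mul, simplex_integral_exp' _ (hcm k) (hce k)]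
  rw [Finset.sum_congr rfl hterm]
  -- right-hand side
  have hrhs : (a * algebraMap ℂ A εn) ^ N = 0 := by rw [mul_pow, hN, zero_mul]
  rw [logOneSub_eq_sum' _ N hrhs, mul_neg, Finset.mul_sum, ← Finset.sum_neg_distrib]
  refine Finset.sum_congr rfl fun k _ => ?_
  have hk1 : ((k : ℂ) + 1) ≠ 0 := Nat.cast_add_one_ne_zero k
  have hz : (-(c * (n : ℂ) * c * εn ^ (k + 1))) * (c * ((n * (k + 1) : ℤ) : ℂ))⁻¹
      = -(c * (((k : ℂ) + 1)⁻¹ * εn ^ (k + 1))) := by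
    rw [show ((n * (k + 1) : ℤ) : ℂ) = (n : ℂ) * ((k : ℂ) + 1) by push_cast; ring]
    have hnn : (n : ℂ) ≠ 0 := Int.cast_ne_zero.mpr hn
    field_simp
  rw [hz, Algebra.smul_def, Algebra.smul_def]
  simp only [map_neg, map_mul, mul_pow, map_pow]
  push_cast
  ring
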